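/- arXiv:1409.0893 — 3 statements merged into one kernel-verified Lean document; each statement's English description precedes it below -/
import Mathlib

section
/- For any nontrivial module H of a graph G and any stable set Y of the quotient graph F = f(G,H,h) containing h, and any stable set X of G[H], the set (Y \ {h}) ∪ X is a stable set of G. -/
variable {V : Type*} [Fintype V] [DecidableEq V]

/-- A stable (independent) set. -/
def IsStable (G : SimpleGraph V) (s : Set V) : Prop :=
  ∀ a ∈ s, ∀ b ∈ s, ¬ G.Adj a b

/-- A weighted coloring, given as a multiplicity function on finsets of vertices. -/
def IsWC (G : SimpleGraph V) (w : V → ℕ) (c : Finset V → ℕ) : Prop :=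
  (∀ S : Finset V, c S ≠ 0 → IsStable G (S : Set V)) ∧
  ∀ v : V, w v ≤ ∑ S : Finset V, (if v ∈ S then c S else 0)

/-- The cost of a weighted coloring. -/
def WCcost (c : Finset V → ℕ) : ℕ := ∑ S : Finset V, c S

/-- The weighted chromatic number. -/
noncomputable def chiW (G : SimpleGraph V) (w : V → ℕ) : ℕ :=
  sInf { n : ℕ | ∃ c : Finset V → ℕ, IsWC G w c ∧ n = WCcost c }

/-- A module of a graph. -/
def IsModule (G : SimpleGraph V) (H : Finset V) : Prop :=
  ∀ v ∉ H, (∀ u ∈ H, G.Adj v u) ∨ (∀ u ∈ H, ¬ G.Adj v u)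

def NontrivialModule (G : SimpleGraph V) (H : Finset V) : Prop :=
  IsModule G H ∧ 1 < H.card ∧ H.card < Fintype.card V

/-- The quotient graph f(G,H,h): `none` plays the role of the contracted vertex h. -/
def quotientGraph (G : SimpleGraph V) (H : Finset V) :
    SimpleGraph (Option {v : V // v ∉ H}) where
  Adj x y :=
    match x, y with
    | some a, some b => G.Adj a.1 b.1
    | some a, none => ∃ u ∈ H, G.Adj a.1 u
    | none, some b => ∃ u ∈ H, G.Adj b.1 u
    | none, none => False
  symm := by
    constructor
    rintro (a | a) (b | b) hab
    · exact hab
    · exact hab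
    · exact hab
    · exact hab.symm
  loopless := by
    constructor
    rintro (a | a) hab
    · exact hab
    · exact G.loopless.irrefl _ hab

/-- Weights on the quotient graph: h gets the weighted chromatic number of G[H]. -/
noncomputable def quotientWeights (G : SimpleGraph V) (w : V → ℕ) (H : Finset V) :
    Option {v : V // v ∉ H} → ℕ :=
  fun x => match x with
  | none => chiW (G.induce (H : Set V)) (fun v => w v.1)
  | some a => w a.1

def Prime' (G : SimpleGraph V) : Prop :=
  ∀ H : Finset V, IsModule G H → H.card ≤ 1 ∨ H = Finset.univ

def IsBuoy (G : SimpleGraph V) (S : Fin 5 → Finset V) : Prop :=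
  (∀ i, (S i).Nonempty) ∧
  (∀ v : V, ∃! i, v ∈ S i) ∧
  (∀ i, ∀ a ∈ S i, ∀ b ∈ S (i + 1), G.Adj a b) ∧
  (∀ i, ∀ a ∈ S i, ∀ b ∈ S (i + 2), ¬ G.Adj a b)

/-- if Y is a stable set of the quotient F = f(G,H,h) containing h and X is a
stable set of G[H], then (Y \ {h}) ∪ X is a stable set of G. -/
theorem merge_stable (G : SimpleGraph V) (H : Finset V) (hH : NontrivialModule G H)
    (Y : Set (Option {v : V // v ∉ H})) (hY : IsStable (quotientGraph G H) Y)
    (hhY : none ∈ Y)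
    (X : Set V) (hXH : X ⊆ (H : Set V)) (hX : IsStable G X) :
    IsStable G {v : V | v ∈ X ∨ ∃ hv : v ∉ H, some ⟨v, hv⟩ ∈ Y} := by
  rintro a (ha | ⟨haH, haY⟩) b (hb | ⟨hbH, hbY⟩) hab
  · exact hX a ha b hb hab
  · exact hY none hhY (some ⟨b, hbH⟩) hbY ⟨a, by exact_mod_cast hXH ha, hab.symm⟩
  · exact hY none hhY (some ⟨a, haH⟩) haY ⟨b, by exact_mod_cast hXH hb, hab⟩
  · exact hY (some ⟨a, haH⟩) haY (some ⟨b, hbH⟩) hbY hab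
end

section
/- If G is a connected (P_5, co-P_5)-free graph on at least 5 vertices that is prime and contains an induced C_5, then G is isomorphic to C_5. -/
variable {V : Type*} [Fintype V] [DecidableEq V]

section C5Helpers

open SimpleGraph


variable {W : Type*} (G : SimpleGraph W)

lemma embedBuilder (H : SimpleGraph (Fin 5)) (f : Fin 5 → W)
    (hinj : Function.Injective f)
    (h1 : ∀ i j, H.Adj i j → G.Adj (f i) (f j))
    (h2 : ∀ i j, i ≠ j → ¬H.Adj i j → ¬G.Adj (f i) (f j)) :
    Nonempty (H ↪g G) := by
  refine ⟨⟨⟨f, hinj⟩, fun {i j} => ⟨fun hG => ?_, h1 i j⟩⟩⟩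
  by_contra hH
  rcases eq_or_ne i j with rfl | hne
  · exact G.irrefl hG
  · exact h2 i j hne hH hG

lemma build_P5 (a b c d e : W)
    (hab : G.Adj a b) (hbc : G.Adj b c) (hcd : G.Adj c d) (hde : G.Adj d e)
    (hac : ¬G.Adj a c) (had : ¬G.Adj a d) (hae : ¬G.Adj a e)
    (hbd : ¬G.Adj b d) (hbe : ¬G.Adj b e) (hce : ¬G.Adj c e) :
    Nonempty (SimpleGraph.pathGraph 5 ↪g G) := by
  have nac : a ≠ c := by rintro rfl; exact had hcd
  have nad : a ≠ d := by rintro rfl; exact hac hcd.symm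
  have nae : a ≠ e := by rintro rfl; exact had hde.symm
  have nbd : b ≠ d := by rintro rfl; exact hbe hde
  have nbe : b ≠ e := by rintro rfl; exact hbd hde.symm
  have nce : c ≠ e := by rintro rfl; exact hbe hbc
  apply embedBuilder G _ ![a, b, c, d, e]
  · intro i j hij
    fin_cases i <;> fin_cases j <;>
      simp_all [hab.ne, hbc.ne, hcd.ne, hde.ne, nac, nad, nae, nbd, nbe, nce,
        hab.ne', hbc.ne', hcd.ne', hde.ne', nac.symm, nad.symm, nae.symm, nbd.symm,
        nbe.symm, nce.symm]
  · intro i j hij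
    rw [pathGraph_adj] at hij
    fin_cases i <;> fin_cases j <;>
      first
        | exact absurd hij (by decide)
        | exact hab | exact hab.symm | exact hbc | exact hbc.symm
        | exact hcd | exact hcd.symm | exact hde | exact hde.symm
  · intro i j hne hH
    rw [pathGraph_adj] at hH
    fin_cases i <;> fin_cases j <;>
      first
        | exact absurd rfl hne
        | exact absurd (by decide) hH
        | exact hac | exact fun h => hac h.symm
        | exact had | exact fun h => had h.symm
        | exact hae | exact fun h => hae h.symm
        | exact hbd | exact fun h => hbd h.symm
        | exact hbe | exact fun h => hbe h.symm
        | exact hce | exact fun h => hce h.symm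

lemma build_coP5 (a b c d e : W)
    (hab : ¬G.Adj a b) (hbc : ¬G.Adj b c) (hcd : ¬G.Adj c d) (hde : ¬G.Adj d e)
    (hac : G.Adj a c) (had : G.Adj a d) (hae : G.Adj a e)
    (hbd : G.Adj b d) (hbe : G.Adj b e) (hce : G.Adj c e) :
    Nonempty ((SimpleGraph.pathGraph 5)ᶜ ↪g G) := by
  have nab : a ≠ b := by rintro rfl; exact hbc hac
  have nbc : b ≠ c := by rintro rfl; exact hcd hbd
  have ncd : c ≠ d := by rintro rfl; exact hde hce
  have nde : d ≠ e := by rintro rfl; exact hcd hce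
  apply embedBuilder G _ ![a, b, c, d, e]
  · intro i j hij
    fin_cases i <;> fin_cases j <;>
      simp_all [hac.ne, had.ne, hae.ne, hbd.ne, hbe.ne, hce.ne,
        hac.ne', had.ne', hae.ne', hbd.ne', hbe.ne', hce.ne',
        nab, nbc, ncd, nde, nab.symm, nbc.symm, ncd.symm, nde.symm]
  · intro i j hij
    rw [compl_adj, pathGraph_adj] at hij
    fin_cases i <;> fin_cases j <;>
      first
        | exact absurd hij (by decide)
        | exact hac | exact hac.symm | exact had | exact had.symm
        | exact hae | exact hae.symm | exact hbd | exact hbd.symm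
        | exact hbe | exact hbe.symm | exact hce | exact hce.symm
  · intro i j hne hH
    rw [compl_adj, pathGraph_adj] at hH
    fin_cases i <;> fin_cases j <;>
      first
        | exact absurd rfl hne
        | exact absurd (by decide) hH
        | exact hab | exact fun h => hab h.symm
        | exact hbc | exact fun h => hbc h.symm
        | exact hcd | exact fun h => hcd h.symm
        | exact hde | exact fun h => hde h.symm

section Core

variable {W : Type*} {G : SimpleGraph W} {c : Fin 5 → W}

lemma adjC (hadj : ∀ a b : Fin 5, G.Adj (c a) (c b) ↔ a = b + 1 ∨ b = a + 1)
    (i s t : Fin 5) (h : s = t + 1 ∨ t = s + 1) : G.Adj (c (i + s)) (c (i + t)) := by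
  rw [hadj, add_assoc, add_assoc, add_right_inj, add_right_inj]; exact h

lemma nadjC (hadj : ∀ a b : Fin 5, G.Adj (c a) (c b) ↔ a = b + 1 ∨ b = a + 1)
    (i s t : Fin 5) (h : ¬(s = t + 1 ∨ t = s + 1)) : ¬G.Adj (c (i + s)) (c (i + t)) := by
  rw [hadj, add_assoc, add_assoc, add_right_inj, add_right_inj]; exact h

lemma lemA (hadj : ∀ a b : Fin 5, G.Adj (c a) (c b) ↔ a = b + 1 ∨ b = a + 1)
    {v : W} (i : Fin 5) (h0 : G.Adj v (c (i + 0))) (h2 : ¬G.Adj v (c (i + 2)))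
    (h3 : ¬G.Adj v (c (i + 3))) (h4 : ¬G.Adj v (c (i + 4))) :
    Nonempty (SimpleGraph.pathGraph 5 ↪g G) :=
  build_P5 G (c (i+2)) (c (i+3)) (c (i+4)) (c (i+0)) v
    (adjC hadj i 2 3 (by decide)) (adjC hadj i 3 4 (by decide)) (adjC hadj i 4 0 (by decide))
    h0.symm
    (nadjC hadj i 2 4 (by decide)) (nadjC hadj i 2 0 (by decide)) (fun h => h2 h.symm)
    (nadjC hadj i 3 0 (by decide)) (fun h => h3 h.symm) (fun h => h4 h.symm)

lemma lemB (hadj : ∀ a b : Fin 5, G.Adj (c a) (c b) ↔ a = b + 1 ∨ b = a + 1)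
    {v : W} (i : Fin 5) (h0 : G.Adj v (c (i + 0))) (h1 : G.Adj v (c (i + 1)))
    (h3 : G.Adj v (c (i + 3))) (h4 : ¬G.Adj v (c (i + 4))) :
    Nonempty ((SimpleGraph.pathGraph 5)ᶜ ↪g G) :=
  build_coP5 G (c (i+0)) (c (i+3)) (c (i+1)) (c (i+4)) v
    (nadjC hadj i 0 3 (by decide)) (nadjC hadj i 3 1 (by decide)) (nadjC hadj i 1 4 (by decide))
    (fun h => h4 h.symm)
    (adjC hadj i 0 1 (by decide)) (adjC hadj i 0 4 (by decide)) h0.symm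
    (adjC hadj i 3 4 (by decide)) h3.symm h1.symm

lemma classify (hadj : ∀ a b : Fin 5, G.Adj (c a) (c b) ↔ a = b + 1 ∨ b = a + 1)
    (hP5 : ¬ Nonempty (SimpleGraph.pathGraph 5 ↪g G))
    (hcoP5 : ¬ Nonempty ((SimpleGraph.pathGraph 5)ᶜ ↪g G)) (v : W) :
    (∀ k, G.Adj v (c k)) ∨ (∀ k, ¬G.Adj v (c k)) ∨
      ∃ i : Fin 5, G.Adj v (c (i + 1)) ∧ G.Adj v (c (i + 4)) ∧
        ¬G.Adj v (c (i + 2)) ∧ ¬G.Adj v (c (i + 3)) := by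
  by_cases b0 : G.Adj v (c 0) <;> by_cases b1 : G.Adj v (c 1) <;>
    by_cases b2 : G.Adj v (c 2) <;> by_cases b3 : G.Adj v (c 3) <;>
    by_cases b4 : G.Adj v (c 4)
  · exact Or.inl (fun k => by fin_cases k <;> assumption)
  · exact absurd (lemB hadj 0 b0 b1 b3 b4) hcoP5
  · exact absurd (lemB hadj 4 b4 b0 b2 b3) hcoP5
  · exact Or.inr (Or.inr ⟨1, b2, b0, b3, b4⟩)
  · exact absurd (lemB hadj 3 b3 b4 b1 b2) hcoP5
  · exact absurd (lemB hadj 0 b0 b1 b3 b4) hcoP5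
  · exact Or.inr (Or.inr ⟨0, b1, b4, b2, b3⟩)
  · exact absurd (lemA hadj 0 b0 b2 b3 b4) hP5
  · exact absurd (lemB hadj 2 b2 b3 b0 b1) hcoP5
  · exact absurd (lemB hadj 2 b2 b3 b0 b1) hcoP5
  · exact absurd (lemB hadj 4 b4 b0 b2 b3) hcoP5
  · exact Or.inr (Or.inr ⟨1, b2, b0, b3, b4⟩)
  · exact Or.inr (Or.inr ⟨4, b0, b3, b1, b2⟩)
  · exact Or.inr (Or.inr ⟨4, b0, b3, b1, b2⟩)
  · exact absurd (lemA hadj 4 b4 b1 b2 b3) hP5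
  · exact absurd (lemA hadj 0 b0 b2 b3 b4) hP5
  · exact absurd (lemB hadj 1 b1 b2 b4 b0) hcoP5
  · exact Or.inr (Or.inr ⟨2, b3, b1, b4, b0⟩)
  · exact absurd (lemB hadj 1 b1 b2 b4 b0) hcoP5
  · exact absurd (lemA hadj 1 b1 b3 b4 b0) hP5
  · exact absurd (lemB hadj 3 b3 b4 b1 b2) hcoP5
  · exact Or.inr (Or.inr ⟨2, b3, b1, b4, b0⟩)
  · exact Or.inr (Or.inr ⟨0, b1, b4, b2, b3⟩)
  · exact absurd (lemA hadj 1 b1 b3 b4 b0) hP5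
  · exact Or.inr (Or.inr ⟨3, b4, b2, b0, b1⟩)
  · exact absurd (lemA hadj 2 b2 b4 b0 b1) hP5
  · exact Or.inr (Or.inr ⟨3, b4, b2, b0, b1⟩)
  · exact absurd (lemA hadj 2 b2 b4 b0 b1) hP5
  · exact absurd (lemA hadj 3 b3 b0 b1 b2) hP5
  · exact absurd (lemA hadj 3 b3 b0 b1 b2) hP5
  · exact absurd (lemA hadj 4 b4 b1 b2 b3) hP5
  · exact Or.inr (Or.inl (fun k => by fin_cases k <;> assumption))

lemma lemL1 (hadj : ∀ a b : Fin 5, G.Adj (c a) (c b) ↔ a = b + 1 ∨ b = a + 1)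
    (hP5 : ¬ Nonempty (SimpleGraph.pathGraph 5 ↪g G)) (v w : W) (i : Fin 5)
    (v1 : G.Adj v (c (i+1))) (v4 : G.Adj v (c (i+4)))
    (v2 : ¬G.Adj v (c (i+2))) (v3 : ¬G.Adj v (c (i+3)))
    (w2 : G.Adj w (c (i+2))) (w0 : G.Adj w (c (i+0)))
    (w3 : ¬G.Adj w (c (i+3))) (w4 : ¬G.Adj w (c (i+4))) :
    G.Adj v w := by
  by_contra hn
  by_cases ha : G.Adj v (c (i+0))
  · exact hP5 (build_P5 G (c (i+3)) (c (i+2)) w (c (i+0)) v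
      (adjC hadj i 3 2 (by decide)) w2.symm w0 ha.symm
      (fun h => w3 h.symm) (nadjC hadj i 3 0 (by decide)) (fun h => v3 h.symm)
      (nadjC hadj i 2 0 (by decide)) (fun h => v2 h.symm) (fun h => hn h.symm))
  · exact hP5 (build_P5 G (c (i+2)) w (c (i+0)) (c (i+4)) v
      w2.symm w0 (adjC hadj i 0 4 (by decide)) v4.symm
      (nadjC hadj i 2 0 (by decide)) (nadjC hadj i 2 4 (by decide)) (fun h => v2 h.symm)
      w4 (fun h => hn h.symm) (fun h => ha h.symm))

lemma lemL2 (hadj : ∀ a b : Fin 5, G.Adj (c a) (c b) ↔ a = b + 1 ∨ b = a + 1)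
    (hcoP5 : ¬ Nonempty ((SimpleGraph.pathGraph 5)ᶜ ↪g G)) (v w : W) (i : Fin 5)
    (v1 : G.Adj v (c (i+1))) (v4 : G.Adj v (c (i+4)))
    (v2 : ¬G.Adj v (c (i+2))) (v3 : ¬G.Adj v (c (i+3)))
    (w3' : G.Adj w (c (i+3))) (w1 : G.Adj w (c (i+1)))
    (w4 : ¬G.Adj w (c (i+4))) (w0 : ¬G.Adj w (c (i+0)))
    (hvw : G.Adj v w) : False := by
  by_cases hb : G.Adj w (c (i+2))
  · exact hcoP5 (build_coP5 G (c (i+3)) v (c (i+2)) (c (i+4)) w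
      (fun h => v3 h.symm) v2 (nadjC hadj i 2 4 (by decide)) (fun h => w4 h.symm)
      (adjC hadj i 3 2 (by decide)) (adjC hadj i 3 4 (by decide)) w3'.symm v4 hvw hb.symm)
  · exact hcoP5 (build_coP5 G (c (i+1)) (c (i+3)) v (c (i+2)) w
      (nadjC hadj i 1 3 (by decide)) (fun h => v3 h.symm) v2 (fun h => hb h.symm)
      v1.symm (adjC hadj i 1 2 (by decide)) w1.symm (adjC hadj i 3 2 (by decide))
      w3'.symm hvw)

lemma lemFull (hadj : ∀ a b : Fin 5, G.Adj (c a) (c b) ↔ a = b + 1 ∨ b = a + 1)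
    (hcoP5 : ¬ Nonempty ((SimpleGraph.pathGraph 5)ᶜ ↪g G)) (f v : W) (i : Fin 5)
    (hf : ∀ k, G.Adj f (c k))
    (v1 : G.Adj v (c (i+1))) (v4 : G.Adj v (c (i+4)))
    (v2 : ¬G.Adj v (c (i+2))) (v3 : ¬G.Adj v (c (i+3)))
    (hnfv : ¬G.Adj f v) : False :=
  hcoP5 (build_coP5 G (c (i+1)) (c (i+4)) (c (i+2)) v f
    (nadjC hadj i 1 4 (by decide)) (nadjC hadj i 4 2 (by decide)) (fun h => v2 h.symm)
    (fun h => hnfv h.symm)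
    (adjC hadj i 1 2 (by decide)) v1.symm (hf (i+1)).symm v4.symm (hf (i+4)).symm
    (hf (i+2)).symm)

lemma lemEmpt (hadj : ∀ a b : Fin 5, G.Adj (c a) (c b) ↔ a = b + 1 ∨ b = a + 1)
    (hP5 : ¬ Nonempty (SimpleGraph.pathGraph 5 ↪g G)) (z v : W) (i : Fin 5)
    (hz : ∀ k, ¬G.Adj z (c k))
    (v1 : G.Adj v (c (i+1))) (v2 : ¬G.Adj v (c (i+2))) (v3 : ¬G.Adj v (c (i+3)))
    (hzv : G.Adj z v) : False :=
  hP5 (build_P5 G z v (c (i+1)) (c (i+2)) (c (i+3))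
    hzv v1 (adjC hadj i 1 2 (by decide)) (adjC hadj i 2 3 (by decide))
    (hz (i+1)) (hz (i+2)) (hz (i+3)) v2 v3 (nadjC hadj i 1 3 (by decide)))

end Core


end C5Helpers

/-- a connected prime (P₅, co-P₅)-free graph on at least 5 vertices
containing an induced C₅ is isomorphic to C₅. -/
theorem prime_with_C5_iso (G : SimpleGraph V) (hconn : G.Connected)
    (hcard : 5 ≤ Fintype.card V) (hprime : Prime' G)
    (hP5 : ¬ Nonempty (SimpleGraph.pathGraph 5 ↪g G))
    (hcoP5 : ¬ Nonempty ((SimpleGraph.pathGraph 5)ᶜ ↪g G))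
    (hC5 : Nonempty (SimpleGraph.cycleGraph 5 ↪g G)) :
    Nonempty (G ≃g SimpleGraph.cycleGraph 5) := by
  classical
  obtain ⟨e⟩ := hC5
  set c : Fin 5 → V := fun i => e i with hc
  have hinj : Function.Injective c := fun a b h => e.injective h
  have hsub : ∀ x y : Fin 5, x - y = 1 ↔ x = y + 1 := fun x y => by
    rw [sub_eq_iff_eq_add, add_comm]
  have hadj : ∀ a b : Fin 5, G.Adj (c a) (c b) ↔ a = b + 1 ∨ b = a + 1 := by
    intro a b
    rw [hc]
    simp only
    rw [e.map_adj_iff, SimpleGraph.cycleGraph_adj, hsub, hsub]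
  -- the set of vertices neither complete nor anticomplete to the C5
  set M : Finset V := Finset.univ.filter
    (fun v => ¬(∀ k, G.Adj v (c k)) ∧ ¬(∀ k, ¬G.Adj v (c k))) with hMdef
  have memM : ∀ v : V, v ∈ M ↔ (¬(∀ k, G.Adj v (c k)) ∧ ¬(∀ k, ¬G.Adj v (c k))) := by
    intro v; rw [hMdef]; simp
  have hcM : ∀ k, c k ∈ M := by
    intro k
    rw [memM]
    constructor
    · intro h; exact G.irrefl (h k)
    · intro h; exact h (k + 1) ((hadj k (k + 1)).mpr (Or.inr rfl))
  have hModM : IsModule G M := by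
    intro x hx
    rw [memM, not_and_or, not_not, not_not] at hx
    have key : ∀ u ∈ M, ∃ i : Fin 5, G.Adj u (c (i + 1)) ∧ G.Adj u (c (i + 4)) ∧
        ¬G.Adj u (c (i + 2)) ∧ ¬G.Adj u (c (i + 3)) := by
      intro u hu
      rcases classify hadj hP5 hcoP5 u with h | h | h
      · exact absurd h ((memM u).mp hu).1
      · exact absurd h ((memM u).mp hu).2
      · exact h
    rcases hx with hfull | hempt
    · left; intro u hu
      obtain ⟨i, ht⟩ := key u hu
      by_contra hn
      exact lemFull hadj hcoP5 x u i hfull ht.1 ht.2.1 ht.2.2.1 ht.2.2.2 hn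
    · right; intro u hu
      obtain ⟨i, ht⟩ := key u hu
      exact fun h => lemEmpt hadj hP5 x u i hempt ht.1 ht.2.2.1 ht.2.2.2 h
  have hMuniv : M = Finset.univ := by
    rcases hprime M hModM with h | h
    · exfalso
      have h2 : 1 < M.card := Finset.one_lt_card.mpr
        ⟨c 0, hcM 0, c 1, hcM 1, fun hh => by have := hinj hh; simp at this⟩
      omega
    · exact h
  have typAll : ∀ v : V, ∃ i : Fin 5, G.Adj v (c (i + 1)) ∧ G.Adj v (c (i + 4)) ∧
      ¬G.Adj v (c (i + 2)) ∧ ¬G.Adj v (c (i + 3)) := by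
    intro v
    have hv : v ∈ M := hMuniv ▸ Finset.mem_univ v
    rcases classify hadj hP5 hcoP5 v with h | h | h
    · exact absurd h ((memM v).mp hv).1
    · exact absurd h ((memM v).mp hv).2
    · exact h
  -- index-shift normalization
  have nrm : ∀ (i a b t : Fin 5), a + b = t → c (i + a + b) = c (i + t) := by
    intro i a b t h; rw [add_assoc, h]
  -- the buoy classes
  set S : Fin 5 → Finset V := fun i => Finset.univ.filter
    (fun v => G.Adj v (c (i + 1)) ∧ G.Adj v (c (i + 4)) ∧
      ¬G.Adj v (c (i + 2)) ∧ ¬G.Adj v (c (i + 3))) with hSdef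
  have memS : ∀ (i : Fin 5) (v : V), v ∈ S i ↔ (G.Adj v (c (i + 1)) ∧ G.Adj v (c (i + 4)) ∧
      ¬G.Adj v (c (i + 2)) ∧ ¬G.Adj v (c (i + 3))) := by
    intro i v; rw [hSdef]; simp
  have hModS : ∀ i, IsModule G (S i) := by
    intro i x hx
    obtain ⟨j, hj⟩ := typAll x
    obtain ⟨d, rfl⟩ : ∃ d, j = i + d := ⟨j - i, by rw [add_comm, sub_add_cancel]⟩
    have hd : d ≠ 0 := by
      rintro rfl
      rw [add_zero] at hj
      exact hx ((memS i x).mpr hj)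
    have hd4 : d = 1 ∨ d = 2 ∨ d = 3 ∨ d = 4 := by
      fin_cases d
      · exact absurd rfl hd
      · exact Or.inl rfl
      · exact Or.inr (Or.inl rfl)
      · exact Or.inr (Or.inr (Or.inl rfl))
      · exact Or.inr (Or.inr (Or.inr rfl))
    obtain ⟨hj1, hj4, hj2, hj3⟩ := hj
    rcases hd4 with rfl | rfl | rfl | rfl
    · -- x ∈ S (i+1)
      rw [nrm i 1 1 2 (by decide)] at hj1
      rw [nrm i 1 4 0 (by decide)] at hj4
      rw [nrm i 1 2 3 (by decide)] at hj2
      rw [nrm i 1 3 4 (by decide)] at hj3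
      left; intro u hu
      obtain ⟨u1, u4, u2, u3⟩ := (memS i u).mp hu
      exact (lemL1 hadj hP5 u x i u1 u4 u2 u3 hj1 hj4 hj2 hj3).symm
    · -- x ∈ S (i+2)
      rw [nrm i 2 1 3 (by decide)] at hj1
      rw [nrm i 2 4 1 (by decide)] at hj4
      rw [nrm i 2 2 4 (by decide)] at hj2
      rw [nrm i 2 3 0 (by decide)] at hj3
      right; intro u hu
      obtain ⟨u1, u4, u2, u3⟩ := (memS i u).mp hu
      exact fun h => lemL2 hadj hcoP5 u x i u1 u4 u2 u3 hj1 hj4 hj2 hj3 h.symm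
    · -- x ∈ S (i+3) : u is "two after" base i+3
      right; intro u hu
      obtain ⟨u1, u4, u2, u3⟩ := (memS i u).mp hu
      have w3' : G.Adj u (c (i + 3 + 3)) := by rw [nrm i 3 3 1 (by decide)]; exact u1
      have w1 : G.Adj u (c (i + 3 + 1)) := by rw [nrm i 3 1 4 (by decide)]; exact u4
      have w4 : ¬G.Adj u (c (i + 3 + 4)) := by rw [nrm i 3 4 2 (by decide)]; exact u2
      have w0 : ¬G.Adj u (c (i + 3 + 0)) := by rw [nrm i 3 0 3 (by decide)]; exact u3
      exact fun h => lemL2 hadj hcoP5 x u (i + 3) hj1 hj4 hj2 hj3 w3' w1 w4 w0 h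
    · -- x ∈ S (i+4) : u is "one after" base i+4
      left; intro u hu
      obtain ⟨u1, u4, u2, u3⟩ := (memS i u).mp hu
      have w2 : G.Adj u (c (i + 4 + 2)) := by rw [nrm i 4 2 1 (by decide)]; exact u1
      have w0 : G.Adj u (c (i + 4 + 0)) := by rw [nrm i 4 0 4 (by decide)]; exact u4
      have w3 : ¬G.Adj u (c (i + 4 + 3)) := by rw [nrm i 4 3 2 (by decide)]; exact u2
      have w4 : ¬G.Adj u (c (i + 4 + 4)) := by rw [nrm i 4 4 3 (by decide)]; exact u3
      exact lemL1 hadj hP5 x u (i + 4) hj1 hj4 hj2 hj3 w2 w0 w3 w4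
  have hcS : ∀ i, c i ∈ S i := by
    intro i
    rw [memS]
    refine ⟨(hadj i (i + 1)).mpr (Or.inr rfl), (hadj i (i + 4)).mpr (Or.inl ?_), ?_, ?_⟩
    · rw [add_assoc]
      exact (left_eq_add.mpr (by decide))
    · intro h
      rcases (hadj i (i + 2)).mp h with h' | h'
      · rw [add_assoc, left_eq_add] at h'; exact absurd h' (by decide)
      · rw [add_right_inj] at h'; exact absurd h' (by decide)
    · intro h
      rcases (hadj i (i + 3)).mp h with h' | h'
      · rw [add_assoc, left_eq_add] at h'; exact absurd h' (by decide)
      · rw [add_right_inj] at h'; exact absurd h' (by decide)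
  have hS1 : ∀ i, S i = {c i} := by
    intro i
    rcases hprime (S i) (hModS i) with h | h
    · exact Finset.eq_singleton_iff_unique_mem.mpr
        ⟨hcS i, fun x hx => Finset.card_le_one.mp h x hx (c i) (hcS i)⟩
    · exfalso
      have : c (i + 1) ∈ S i := h ▸ Finset.mem_univ _
      exact G.irrefl ((memS i (c (i + 1))).mp this).1
  have hsurj : Function.Surjective c := by
    intro v
    obtain ⟨i, ht⟩ := typAll v
    have : v ∈ S i := (memS i v).mpr ht
    rw [hS1 i, Finset.mem_singleton] at this
    exact ⟨i, this.symm⟩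
  exact ⟨(RelIso.mk (Equiv.ofBijective c ⟨hinj, hsurj⟩)
    (fun {a b} => e.map_adj_iff)).symm⟩
end

section
/- Let H be a nontrivial module of G and F = f(G,H,h) the quotient with w_F(h) = χ_w(G[H]). Then χ_w(F) ≤ χ_w(G). -/
variable {V : Type*} [Fintype V] [DecidableEq V]

lemma exists_wc (G : SimpleGraph V) (w : V → ℕ) :
    ∃ c : Finset V → ℕ, IsWC G w c := by
  classical
  refine ⟨fun S => ∑ v, if S = {v} then w v else 0, ?_, ?_⟩
  · intro S hS a ha b hb
    have hex : ∃ v, S = {v} := by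
      by_contra hne
      push_neg at hne
      exact hS (by simp [hne])
    obtain ⟨v, rfl⟩ := hex
    simp only [Finset.coe_singleton, Set.mem_singleton_iff] at ha hb
    subst ha; subst hb
    exact G.loopless.irrefl _
  · intro v
    have h1 : (fun S : Finset V => if v ∈ S then ∑ u, (if S = {u} then w u else 0) else 0) {v}
        = w v := by
      simp [Finset.singleton_inj]
    have h2 := Finset.single_le_sum
      (f := fun S : Finset V => if v ∈ S then ∑ u, (if S = {u} then w u else 0) else 0)
      (fun _ _ => Nat.zero_le _) (Finset.mem_univ {v})
    exact le_trans (le_of_eq h1.symm) h2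

lemma sum_push {β : Type*} [Fintype β] [DecidableEq β]
    (f : Finset V → Finset β) (g : Finset V → ℕ) (P : Finset β → Prop) [DecidablePred P] :
    ∑ T : Finset β, (if P T then ∑ S : Finset V, (if f S = T then g S else 0) else 0)
      = ∑ S : Finset V, (if P (f S) then g S else 0) := by
  have h1 : ∀ T : Finset β, (if P T then ∑ S : Finset V, (if f S = T then g S else 0) else 0)
      = ∑ S : Finset V, (if f S = T then (if P T then g S else 0) else 0) := by
    intro T
    split
    · next h => simp [h]
    · next h => simp [h]
  simp_rw [h1]
  rw [Finset.sum_comm]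
  refine Finset.sum_congr rfl fun S _ => ?_
  rw [Finset.sum_ite_eq]
  simp

/-- χ_w(F) ≤ χ_w(G) for the quotient F = f(G,H,h). -/
theorem quotient_chiW_le (G : SimpleGraph V) (w : V → ℕ) (H : Finset V)
    (hH : NontrivialModule G H) :
    chiW (quotientGraph G H) (quotientWeights G w H) ≤ chiW G w := by
  classical
  obtain ⟨c0, hc0⟩ := exists_wc G w
  have hne : {n : ℕ | ∃ c, IsWC G w c ∧ n = WCcost c}.Nonempty := ⟨WCcost c0, c0, hc0, rfl⟩
  obtain ⟨c, hc, heq⟩ := Nat.sInf_mem hne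
  -- the map on stable sets
  set φ : Finset V → Finset (Option {v : V // v ∉ H}) := fun S =>
    Finset.univ.filter (fun x => Option.elim x ((S ∩ H).Nonempty) (fun a => a.1 ∈ S)) with hφ
  have hmem_some : ∀ (S : Finset V) (a : {v : V // v ∉ H}), some a ∈ φ S ↔ a.1 ∈ S := by
    intro S a; simp [hφ]
  have hmem_none : ∀ (S : Finset V), none ∈ φ S ↔ (S ∩ H).Nonempty := by
    intro S; simp [hφ]
  set c' : Finset (Option {v : V // v ∉ H}) → ℕ := fun T =>
    ∑ S : Finset V, (if φ S = T then c S else 0) with hc'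
  -- membership sums
  have key : ∀ (P : Finset (Option {v : V // v ∉ H}) → Prop) [DecidablePred P],
      ∑ T, (if P T then c' T else 0) = ∑ S : Finset V, (if P (φ S) then c S else 0) := by
    intro P _
    exact sum_push φ c P
  have hwc : IsWC (quotientGraph G H) (quotientWeights G w H) c' := by
    constructor
    · -- stability
      intro T hT
      have hex : ∃ S, c S ≠ 0 ∧ φ S = T := by
        by_contra hno
        push_neg at hno
        apply hT
        rw [hc']
        refine Finset.sum_eq_zero fun S _ => ?_
        by_cases h : φ S = T
        · by_cases h2 : c S = 0
          · simp [h, h2]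
          · exact absurd h (hno S h2)
        · simp [h]
      obtain ⟨S, hcS, rfl⟩ := hex
      have hst := hc.1 S hcS
      rintro (⟨⟩ | a) hx (⟨⟩ | b) hy hadj
      · exact hadj
      · -- none, some b
        rw [Finset.mem_coe, hmem_none] at hx
        rw [Finset.mem_coe, hmem_some] at hy
        obtain ⟨u0, hu0⟩ := hx
        rw [Finset.mem_inter] at hu0
        obtain ⟨u, huH, hu⟩ := hadj
        rcases hH.1 b.1 b.2 with hall | hnone
        · exact hst b.1 hy u0 hu0.1 (hall u0 hu0.2)
        · exact hnone u huH hu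
      · -- some a, none
        rw [Finset.mem_coe, hmem_some] at hx
        rw [Finset.mem_coe, hmem_none] at hy
        obtain ⟨u0, hu0⟩ := hy
        rw [Finset.mem_inter] at hu0
        obtain ⟨u, huH, hu⟩ := hadj
        rcases hH.1 a.1 a.2 with hall | hnone
        · exact hst a.1 hx u0 hu0.1 (hall u0 hu0.2)
        · exact hnone u huH hu
      · -- some a, some b
        rw [Finset.mem_coe, hmem_some] at hx hy
        exact hst a.1 hx b.1 hy hadj
    · rintro (⟨⟩ | a)
      · -- the contracted vertex: weight χ_w(G[H])
        show chiW (G.induce (H : Set V)) (fun v => w v.1) ≤ _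
        rw [key (fun T => none ∈ T)]
        -- build a coloring of G[H]
        set ψ : Finset V → Finset ↥(H : Set V) := fun S =>
          Finset.univ.filter (fun x => x.1 ∈ S) with hψ
        set d : Finset ↥(H : Set V) → ℕ := fun T =>
          if T ≠ ∅ then ∑ S : Finset V, (if ψ S = T then c S else 0) else 0 with hd
        have hdwc : IsWC (G.induce (H : Set V)) (fun v => w v.1) d := by
          constructor
          · intro T hT
            have hex : ∃ S, c S ≠ 0 ∧ ψ S = T := by
              by_contra hno
              push_neg at hno
              apply hT
              show (if T ≠ ∅ then ∑ S : Finset V, (if ψ S = T then c S else 0) else 0) = 0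
              split
              · refine Finset.sum_eq_zero fun S _ => ?_
                by_cases h : ψ S = T
                · by_cases h2 : c S = 0
                  · simp [h, h2]
                  · exact absurd h (hno S h2)
                · simp [h]
              · rfl
            obtain ⟨S, hcS, rfl⟩ := hex
            have hst := hc.1 S hcS
            intro x hx y hy hadj
            rw [Finset.mem_coe, hψ] at hx hy
            simp only [Finset.mem_filter, Finset.mem_univ, true_and] at hx hy
            exact hst x.1 hx y.1 hy hadj
          · intro v
            have hbd := hc.2 v.1
            have hrw : ∑ T : Finset ↥(H : Set V), (if v ∈ T then d T else 0)
                = ∑ S : Finset V, (if v ∈ ψ S ∧ ψ S ≠ ∅ then c S else 0) := by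
              have : ∀ T : Finset ↥(H : Set V), (if v ∈ T then d T else 0)
                  = (if v ∈ T ∧ T ≠ ∅ then ∑ S : Finset V, (if ψ S = T then c S else 0) else 0) := by
                intro T
                rw [hd]
                by_cases hv : v ∈ T
                · have : T ≠ ∅ := Finset.ne_empty_of_mem hv
                  simp [hv, this]
                · simp [hv]
              simp_rw [this]
              exact sum_push ψ c (fun T => v ∈ T ∧ T ≠ ∅)
            rw [hrw]
            have : ∀ S : Finset V, (if v ∈ ψ S ∧ ψ S ≠ ∅ then c S else 0)
                = (if v.1 ∈ S then c S else 0) := by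
              intro S
              by_cases hv : v.1 ∈ S
              · have h1 : v ∈ ψ S := by simp [hψ, hv]
                simp [hv, h1, Finset.ne_empty_of_mem h1]
              · have h1 : v ∉ ψ S := by simp [hψ, hv]
                simp [hv, h1]
            simp_rw [this]
            exact hbd
        have hle : chiW (G.induce (H : Set V)) (fun v => w v.1) ≤ WCcost d :=
          Nat.sInf_le ⟨d, hdwc, rfl⟩
        have hcost : WCcost d = ∑ S : Finset V, (if ψ S ≠ ∅ then c S else 0) := by
          rw [WCcost]
          have : ∀ T : Finset ↥(H : Set V), d T
              = (if T ≠ ∅ then ∑ S : Finset V, (if ψ S = T then c S else 0) else 0) := fun T => rfl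
          simp_rw [this]
          exact sum_push ψ c (fun T => T ≠ ∅)
        rw [hcost] at hle
        refine hle.trans (le_of_eq (Finset.sum_congr rfl fun S _ => ?_))
        have : (ψ S ≠ ∅) ↔ none ∈ φ S := by
          rw [hmem_none]
          constructor
          · intro h
            obtain ⟨x, hx⟩ := Finset.nonempty_of_ne_empty h
            rw [hψ] at hx
            simp only [Finset.mem_filter, Finset.mem_univ, true_and] at hx
            exact ⟨x.1, Finset.mem_inter.mpr ⟨hx, by exact_mod_cast x.2⟩⟩
          · rintro ⟨u, hu⟩
            rw [Finset.mem_inter] at hu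
            have : (⟨u, by exact_mod_cast hu.2⟩ : ↥(H : Set V)) ∈ ψ S := by
              simp [hψ, hu.1]
            exact Finset.ne_empty_of_mem this
        by_cases h : none ∈ φ S
        · simp [h, this.mpr h]
        · have h2 : ¬ψ S ≠ ∅ := fun h' => h (this.mp h')
          simp [h, h2]
      · -- an ordinary vertex
        show w a.1 ≤ _
        rw [key (fun T => some a ∈ T)]
        have hbd := hc.2 a.1
        refine hbd.trans (le_of_eq (Finset.sum_congr rfl fun S _ => ?_))
        exact if_congr (hmem_some S a).symm rfl rfl
  have hcost' : WCcost c' = WCcost c := by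
    rw [WCcost, WCcost]
    have : ∀ T, c' T = (if (fun _ : Finset (Option {v : V // v ∉ H}) => True) T
        then ∑ S : Finset V, (if φ S = T then c S else 0) else 0) := by
      intro T; simp [hc']
    simp_rw [this]
    rw [sum_push φ c (fun _ => True)]
    simp
  have : chiW (quotientGraph G H) (quotientWeights G w H) ≤ WCcost c' :=
    Nat.sInf_le ⟨c', hwc, rfl⟩
  rw [hcost'] at this
  have heq' : chiW G w = WCcost c := heq
  rw [heq']
  exact this
end
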